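/- Let X₁, X₂, … be i.i.d. real-valued random variables with partial sums S_k = X₁ + ⋯ + X_k, and define ψ(k) = sup_{t ∈ [0,1]} |P({S_k} ≤ t) − t|, where {·} denotes fractional part. Suppose ψ(k) ≤ C k^{-(1+δ)} for some δ > 0 and all k ≥ 1. Let f, g : ℝ → ℝ be 1-periodic functions of bounded variation on [0,1] with ∫₀¹ f = ∫₀¹ g = 0, and let U be uniform on [0,1) independent of the X_j. Then the series ∑_{k=1}^∞ E[f(U) g(U + S_k)] converges absolutely, with |E[f(U) g(U + S_k)]| ≤ V(g) ‖f‖_{L¹} ψ(k) for every k. -/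

import Mathlib

open MeasureTheory ProbabilityTheory

open MeasureTheory Set
open scoped ENNReal

section aux
variable {g : ℝ → ℝ}

lemma evar_shift (hgp : Function.Periodic g 1) (a b : ℝ) :
    eVariationOn g (Icc (a+1) (b+1)) = eVariationOn g (Icc a b) := by
  have h1 : eVariationOn (g ∘ (· + 1)) (Icc a b) = eVariationOn g ((· + 1) '' Icc a b) :=
    eVariationOn.comp_eq_of_monotoneOn _ _ ((monotone_id.add_const 1).monotoneOn _)
  have h2 : g ∘ (· + 1) = g := funext fun x => hgp x
  rw [h2, Set.image_add_const_Icc] at h1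
  exact h1.symm

lemma evar_Icc_split (a b c : ℝ) (hab : a ≤ b) (hbc : b ≤ c) :
    eVariationOn g (Icc a b) + eVariationOn g (Icc b c) = eVariationOn g (Icc a c) := by
  have := eVariationOn.Icc_add_Icc g (s := univ) hab hbc (mem_univ b)
  simpa using this

lemma evar_window (hgp : Function.Periodic g 1) {a : ℝ} (ha : a ∈ Icc (0:ℝ) 1) :
    eVariationOn g (Icc a (a+1)) = eVariationOn g (Icc 0 1) := by
  obtain ⟨h0, h1⟩ := ha
  have e1 : eVariationOn g (Icc a 1) + eVariationOn g (Icc 1 (a+1)) = eVariationOn g (Icc a (a+1)) :=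
    evar_Icc_split a 1 (a+1) h1 (by linarith)
  have e2 : eVariationOn g (Icc 1 (a+1)) = eVariationOn g (Icc 0 a) := by
    have := evar_shift hgp 0 a; simpa using this
  have e3 : eVariationOn g (Icc 0 a) + eVariationOn g (Icc a 1) = eVariationOn g (Icc 0 1) :=
    evar_Icc_split 0 a 1 h0 h1
  rw [e2] at e1
  rw [← e1, ← e3, add_comm]

lemma evar_big (hgp : Function.Periodic g 1) (hgBV : BoundedVariationOn g (Icc 0 1)) :
    eVariationOn g (Icc (-1) 3) ≠ ⊤ := by
  have em1 : eVariationOn g (Icc (-1:ℝ) 0) = eVariationOn g (Icc 0 1) := by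
    have := evar_shift hgp (-1) 0; simpa using this.symm
  have e12 : eVariationOn g (Icc (1:ℝ) 2) = eVariationOn g (Icc 0 1) := by
    have := evar_shift hgp 0 1; norm_num at this; exact this
  have e23 : eVariationOn g (Icc (2:ℝ) 3) = eVariationOn g (Icc 1 2) := by
    have := evar_shift hgp 1 2; norm_num at this; exact this
  have h1 : eVariationOn g (Icc (-1:ℝ) 3) =
      eVariationOn g (Icc (-1:ℝ) 0) + (eVariationOn g (Icc (0:ℝ) 1) +
        (eVariationOn g (Icc (1:ℝ) 2) + eVariationOn g (Icc (2:ℝ) 3))) := by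
    rw [evar_Icc_split (1:ℝ) 2 3 (by norm_num) (by norm_num),
      evar_Icc_split (0:ℝ) 1 3 (by norm_num) (by norm_num),
      evar_Icc_split (-1:ℝ) 0 3 (by norm_num) (by norm_num)]
  rw [h1, em1, e12, e23, e12]
  simp only [ne_eq, ENNReal.add_eq_top, not_or]
  exact ⟨hgBV, hgBV, hgBV, hgBV⟩

lemma periodic_bound (hgp : Function.Periodic g 1) (hgBV : BoundedVariationOn g (Icc 0 1)) (x : ℝ) :
    |g x| ≤ |g 0| + (eVariationOn g (Icc 0 1)).toReal := by
  have hx : g (Int.fract x) = g x := by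
    have := hgp.sub_int_mul_eq (x := x) ⌊x⌋
    rw [mul_one] at this
    rw [Int.fract]
    exact this
  rw [← hx]
  have hmem : Int.fract x ∈ Icc (0:ℝ) 1 :=
    ⟨Int.fract_nonneg x, le_of_lt (Int.fract_lt_one x)⟩
  have h0 : (0:ℝ) ∈ Icc (0:ℝ) 1 := by norm_num
  have := hgBV.dist_le hmem h0
  rw [Real.dist_eq] at this
  calc |g (Int.fract x)| ≤ |g 0| + |g (Int.fract x) - g 0| := by
        have := abs_sub_abs_le_abs_sub (g (Int.fract x)) (g 0); linarith [abs_nonneg (g (Int.fract x) - g 0)]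
    _ ≤ |g 0| + (eVariationOn g (Icc 0 1)).toReal := by linarith
end aux

lemma stepapprox (ρ : Measure ℝ) [IsFiniteMeasure ρ] (hρ : ρ (Set.Ico (0:ℝ) 1)ᶜ = 0)
    {h : ℝ → ℝ} (hm : Measurable h) {K₀ : ℝ}
    (hmod : ∀ x t : ℝ, x ∈ Icc (0:ℝ) 1 → t ∈ Icc (0:ℝ) 1 → |h x - h t| ≤ K₀ * |x - t|)
    (n : ℕ) (hn : 0 < n) :
    |∫ x, h x ∂ρ - (h 0 * (ρ {0}).toReal + ∑ i ∈ Finset.range n,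
      h (((i:ℝ)+1)/n) * ((ρ (Iic (((i:ℝ)+1)/n))).toReal - (ρ (Iic ((i:ℝ)/n))).toReal))|
      ≤ K₀ / n * (ρ univ).toReal := by
  have hn' : (0:ℝ) < n := by exact_mod_cast hn
  have hK₀ : 0 ≤ K₀ := by
    have := hmod 0 1 (by norm_num) (by norm_num)
    have h2 := abs_nonneg (h 0 - h 1)
    simp only [zero_sub, abs_neg, abs_one, mul_one] at this
    linarith
  -- boundedness of h on Icc 0 1
  have hbd : ∀ x ∈ Icc (0:ℝ) 1, |h x| ≤ |h 0| + K₀ := by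
    intro x hx
    have := hmod x 0 hx (by norm_num)
    have h3 : |x - 0| ≤ 1 := by rw [sub_zero, abs_of_nonneg hx.1]; exact hx.2
    have h4 : K₀ * |x - 0| ≤ K₀ * 1 := mul_le_mul_of_nonneg_left h3 hK₀
    calc |h x| ≤ |h 0| + |h x - h 0| := by
          have := abs_sub_abs_le_abs_sub (h x) (h 0); linarith [abs_nonneg (h x - h 0)]
      _ ≤ |h 0| + K₀ := by rw [mul_one] at h4; linarith
  -- integrability on subsets of Icc 0 1
  have hint : ∀ s : Set ℝ, s ⊆ Icc (0:ℝ) 1 → MeasurableSet s → IntegrableOn h s ρ := by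
    intro s hs hms
    refine Integrable.mono' (integrable_const (|h 0| + K₀)) (hm.aestronglyMeasurable) ?_
    refine (ae_restrict_iff' hms).2 (Filter.Eventually.of_forall fun x hx => ?_)
    simpa [Real.norm_eq_abs] using hbd x (hs hx)
  -- the total integral localizes to Icc 0 1
  have hres : ρ.restrict (Icc (0:ℝ) 1) = ρ := by
    apply Measure.restrict_eq_self_of_ae_mem
    have : ρ (Icc (0:ℝ) 1)ᶜ = 0 :=
      measure_mono_null (compl_subset_compl.2 Ico_subset_Icc_self) hρ
    exact (MeasureTheory.ae_iff).2 this
  have hIcc : ∫ x, h x ∂ρ = ∫ x in Icc (0:ℝ) 1, h x ∂ρ := by rw [hres]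
  -- split off {0}
  have hsetEq : Icc (0:ℝ) 1 = ({0} : Set ℝ) ∪ Ioc (0:ℝ) 1 := by
    ext x
    simp only [mem_union, mem_singleton_iff, mem_Icc, mem_Ioc]
    constructor
    · rintro ⟨h1, h2⟩
      rcases eq_or_lt_of_le h1 with h3 | h3
      · exact Or.inl h3.symm
      · exact Or.inr ⟨h3, h2⟩
    · rintro (rfl | ⟨h1, h2⟩)
      · norm_num
      · exact ⟨le_of_lt h1, h2⟩
  have hsplit0 : ∫ x in Icc (0:ℝ) 1, h x ∂ρ
      = ∫ x in ({0} : Set ℝ), h x ∂ρ + ∫ x in Ioc (0:ℝ) 1, h x ∂ρ := by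
    rw [hsetEq]
    exact MeasureTheory.setIntegral_union (by simp) measurableSet_Ioc
      (hint _ (by intro x hx; simp at hx; simp [hx]) (measurableSet_singleton 0))
      (hint _ Ioc_subset_Icc_self measurableSet_Ioc)
  have hsing : ∫ x in ({0} : Set ℝ), h x ∂ρ = h 0 * (ρ {0}).toReal := by
    rw [Measure.restrict_singleton, integral_smul_measure, integral_dirac]
    simp [mul_comm, ENNReal.toReal_mul]
  -- partition points
  set t : ℕ → ℝ := fun i => (i:ℝ)/n with ht
  have tcast : ∀ i : ℕ, t (i+1) = ((i:ℝ)+1)/n := by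
    intro i; simp only [t]; push_cast; ring
  have htmem : ∀ i : ℕ, i ≤ n → t i ∈ Icc (0:ℝ) 1 := by
    intro i hi
    exact ⟨by positivity, by rw [div_le_one hn']; exact_mod_cast hi⟩
  have htle : ∀ i : ℕ, t i ≤ t (i+1) := by
    intro i
    rw [tcast i]
    exact (div_le_div_iff_of_pos_right hn').2 (by linarith)
  have hdiff : ∀ i : ℕ, t (i+1) - t i = 1/n := by
    intro i; rw [tcast i]; simp only [t]; ring
  -- splitting the integral over Ioc 0 1
  have key1 : ∀ m : ℕ, m ≤ n → ∫ x in Ioc (0:ℝ) (t m), h x ∂ρ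
      = ∑ i ∈ Finset.range m, ∫ x in Ioc (t i) (t (i+1)), h x ∂ρ := by
    intro m
    induction m with
    | zero => intro _; simp [t]
    | succ m ih =>
      intro hm
      have hm' : m ≤ n := le_of_lt (Nat.lt_of_succ_le hm)
      have h0m : (0:ℝ) ≤ t m := (htmem m hm').1
      rw [Finset.sum_range_succ, ← ih hm',
        ← MeasureTheory.setIntegral_union (Set.Ioc_disjoint_Ioc_of_le le_rfl) measurableSet_Ioc
          (hint _ (Set.Ioc_subset_Icc_self.trans (Icc_subset_Icc le_rfl (htmem m hm').2))
            measurableSet_Ioc)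
          (hint _ (Set.Ioc_subset_Icc_self.trans
            (Icc_subset_Icc (htmem m hm').1 (htmem (m+1) hm).2)) measurableSet_Ioc),
        Set.Ioc_union_Ioc_eq_Ioc h0m (htle m)]
  -- per-piece approximation
  have hpiece : ∀ i ∈ Finset.range n,
      |∫ x in Ioc (t i) (t (i+1)), h x ∂ρ - h (t (i+1)) * (ρ (Ioc (t i) (t (i+1)))).toReal|
        ≤ K₀/n * (ρ (Ioc (t i) (t (i+1)))).toReal := by
    intro i hi
    rw [Finset.mem_range] at hi
    have hi1 : i + 1 ≤ n := hi
    have hmemi := htmem i (le_of_lt hi)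
    have hmemi1 := htmem (i+1) hi1
    have hsub : Ioc (t i) (t (i+1)) ⊆ Icc (0:ℝ) 1 :=
      Set.Ioc_subset_Icc_self.trans (Icc_subset_Icc hmemi.1 hmemi1.2)
    have hconst : ∫ x in Ioc (t i) (t (i+1)), h (t (i+1)) ∂ρ
        = h (t (i+1)) * (ρ (Ioc (t i) (t (i+1)))).toReal := by
      rw [setIntegral_const, smul_eq_mul, mul_comm, measureReal_def]
    rw [← hconst, ← integral_sub (hint _ hsub measurableSet_Ioc) (integrable_const _)]
    have := MeasureTheory.norm_setIntegral_le_of_norm_le_const (μ := ρ)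
      (s := Ioc (t i) (t (i+1))) (f := fun x => h x - h (t (i+1))) (C := K₀/n)
      (measure_lt_top ρ _) ?_
    · calc |∫ x in Ioc (t i) (t (i+1)), (h x - h (t (i+1))) ∂ρ|
          ≤ K₀/n * (ρ (Ioc (t i) (t (i+1)))).toReal := this
        _ ≤ K₀/n * (ρ (Ioc (t i) (t (i+1)))).toReal := le_rfl
    · intro x hx
      rw [Real.norm_eq_abs]
      have hxm : x ∈ Icc (0:ℝ) 1 := hsub hx
      have := hmod x (t (i+1)) hxm hmemi1
      have habs : |x - t (i+1)| ≤ 1/n := by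
        rw [abs_sub_comm, abs_of_nonneg (by linarith [hx.2] : (0:ℝ) ≤ t (i+1) - x)]
        have := hx.1
        have := hdiff i
        linarith
      calc |h x - h (t (i+1))| ≤ K₀ * |x - t (i+1)| := hmod x (t (i+1)) hxm hmemi1
        _ ≤ K₀ * (1/n) := mul_le_mul_of_nonneg_left habs hK₀
        _ = K₀/n := by ring
  -- measure of each piece in terms of Iic values
  have hmp : ∀ i : ℕ, i < n → (ρ (Ioc (t i) (t (i+1)))).toReal
      = (ρ (Iic (t (i+1)))).toReal - (ρ (Iic (t i))).toReal := by
    intro i hi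
    have hdisj : Disjoint (Iic (t i)) (Ioc (t i) (t (i+1))) := by
      apply Set.disjoint_left.2
      rintro x hx1 hx2
      exact absurd hx1 (not_le.2 hx2.1)
    have hu : ρ (Iic (t i)) + ρ (Ioc (t i) (t (i+1))) = ρ (Iic (t (i+1))) := by
      rw [← measure_union hdisj measurableSet_Ioc, Set.Iic_union_Ioc_eq_Iic (htle i)]
    have f1 : ρ (Iic (t i)) ≠ ⊤ := measure_ne_top ρ _
    have f2 : ρ (Ioc (t i) (t (i+1))) ≠ ⊤ := measure_ne_top ρ _
    have := congrArg ENNReal.toReal hu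
    rw [ENNReal.toReal_add f1 f2] at this
    linarith
  -- main identity
  have tn1 : t n = 1 := by simp only [t]; field_simp
  have main : ∫ x, h x ∂ρ - (h 0 * (ρ {0}).toReal + ∑ i ∈ Finset.range n,
      h (((i:ℝ)+1)/n) * ((ρ (Iic (((i:ℝ)+1)/n))).toReal - (ρ (Iic ((i:ℝ)/n))).toReal))
      = ∑ i ∈ Finset.range n,
        (∫ x in Ioc (t i) (t (i+1)), h x ∂ρ - h (t (i+1)) * (ρ (Ioc (t i) (t (i+1)))).toReal) := by
    have hsum_eq : ∑ i ∈ Finset.range n,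
        h (((i:ℝ)+1)/n) * ((ρ (Iic (((i:ℝ)+1)/n))).toReal - (ρ (Iic ((i:ℝ)/n))).toReal)
        = ∑ i ∈ Finset.range n, h (t (i+1)) * (ρ (Ioc (t i) (t (i+1)))).toReal := by
      apply Finset.sum_congr rfl
      intro i hi
      rw [Finset.mem_range] at hi
      rw [hmp i hi, tcast i]
    rw [hsum_eq, hIcc, hsplit0, hsing, ← tn1, key1 n le_rfl, Finset.sum_sub_distrib]
    ring
  rw [main]
  calc |∑ i ∈ Finset.range n,
      (∫ x in Ioc (t i) (t (i+1)), h x ∂ρ - h (t (i+1)) * (ρ (Ioc (t i) (t (i+1)))).toReal)|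
      ≤ ∑ i ∈ Finset.range n,
        |∫ x in Ioc (t i) (t (i+1)), h x ∂ρ - h (t (i+1)) * (ρ (Ioc (t i) (t (i+1)))).toReal| :=
        Finset.abs_sum_le_sum_abs _ _
    _ ≤ ∑ i ∈ Finset.range n, K₀/n * (ρ (Ioc (t i) (t (i+1)))).toReal :=
        Finset.sum_le_sum hpiece
    _ = K₀/n * ∑ i ∈ Finset.range n, (ρ (Ioc (t i) (t (i+1)))).toReal := by
        rw [Finset.mul_sum]
    _ ≤ K₀/n * (ρ univ).toReal := by
        apply mul_le_mul_of_nonneg_left _ (by positivity)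
        have : ∑ i ∈ Finset.range n, (ρ (Ioc (t i) (t (i+1)))).toReal
            = ∑ i ∈ Finset.range n,
              ((ρ (Iic (t (i+1)))).toReal - (ρ (Iic (t i))).toReal) := by
          apply Finset.sum_congr rfl
          intro i hi; rw [Finset.mem_range] at hi; exact hmp i hi
        rw [this, Finset.sum_range_sub (fun i => (ρ (Iic (t i))).toReal)]
        have h1 : (ρ (Iic (t n))).toReal ≤ (ρ univ).toReal :=
          ENNReal.toReal_mono (measure_ne_top ρ _) (measure_mono (subset_univ _))
        have h2 : 0 ≤ (ρ (Iic (t 0))).toReal := ENNReal.toReal_nonneg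
        linarith
lemma koksma (μ : Measure ℝ) [IsProbabilityMeasure μ] (hμ : μ (Set.Ico (0:ℝ) 1)ᶜ = 0)
    {h : ℝ → ℝ} (hm : Measurable h) {K₀ : ℝ}
    (hmod : ∀ x t : ℝ, x ∈ Icc (0:ℝ) 1 → t ∈ Icc (0:ℝ) 1 → |h x - h t| ≤ K₀ * |x - t|)
    (hBV : BoundedVariationOn h (Icc 0 1))
    {ψ₀ : ℝ} (hψ₀ : ∀ t ∈ Icc (0:ℝ) 1, |(μ (Iic t)).toReal - t| ≤ ψ₀) :
    |∫ x, h x ∂μ - ∫ x in (0:ℝ)..1, h x| ≤ (eVariationOn h (Icc 0 1)).toReal * ψ₀ := by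
  have hK₀ : 0 ≤ K₀ := by
    have := hmod 0 1 (by norm_num) (by norm_num)
    have h2 := abs_nonneg (h 0 - h 1)
    simp only [zero_sub, abs_neg, abs_one, mul_one] at this
    linarith
  have hψnn : 0 ≤ ψ₀ := le_trans (abs_nonneg _) (hψ₀ 1 (by norm_num))
  -- the lebesgue side measure
  set ρ : Measure ℝ := volume.restrict (Ico (0:ℝ) 1) with hρdef
  haveI : IsFiniteMeasure ρ := by
    constructor
    rw [hρdef, Measure.restrict_apply_univ, Real.volume_Ico]
    norm_num
  have hρc : ρ (Set.Ico (0:ℝ) 1)ᶜ = 0 := by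
    rw [hρdef, Measure.restrict_apply (measurableSet_Ico.compl)]
    simp
  have hρ0 : ρ ({0} : Set ℝ) = 0 := by
    rw [hρdef, Measure.restrict_apply (measurableSet_singleton 0)]
    exact measure_mono_null Set.inter_subset_left (Real.volume_singleton)
  have hρIic : ∀ s : ℝ, s ∈ Icc (0:ℝ) 1 → (ρ (Iic s)).toReal = s := by
    intro s hs
    rw [hρdef, Measure.restrict_apply measurableSet_Iic]
    have hsub1 : Ico (0:ℝ) s ⊆ Iic s ∩ Ico 0 1 := by
      intro x hx; exact ⟨le_of_lt hx.2, hx.1, lt_of_lt_of_le hx.2 hs.2⟩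
    have hsub2 : Iic s ∩ Ico 0 1 ⊆ Icc (0:ℝ) s := by
      intro x hx; exact ⟨hx.2.1, hx.1⟩
    have h1 : volume (Iic s ∩ Ico 0 1) = ENNReal.ofReal s := by
      apply le_antisymm
      · calc volume (Iic s ∩ Ico 0 1) ≤ volume (Icc (0:ℝ) s) := measure_mono hsub2
          _ = ENNReal.ofReal s := by rw [Real.volume_Icc, sub_zero]
      · calc ENNReal.ofReal s = volume (Ico (0:ℝ) s) := by rw [Real.volume_Ico, sub_zero]
          _ ≤ volume (Iic s ∩ Ico 0 1) := measure_mono hsub1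
    rw [h1, ENNReal.toReal_ofReal hs.1]
  have hρint : ∫ x, h x ∂ρ = ∫ x in (0:ℝ)..1, h x := by
    rw [hρdef, intervalIntegral.integral_of_le (by norm_num : (0:ℝ) ≤ 1)]
    rw [MeasureTheory.integral_Ioc_eq_integral_Ioo, ← MeasureTheory.integral_Ico_eq_integral_Ioo]
  -- key quantities
  set F : ℝ → ℝ := fun s => (μ (Iic s)).toReal with hF
  set G : ℝ → ℝ := fun s => F s - s with hG
  have hμIco : μ (Ico (0:ℝ) 1) = 1 := by
    have := measure_add_measure_compl (μ := μ) (measurableSet_Ico (a := (0:ℝ)) (b := 1))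
    rw [hμ, add_zero] at this
    rw [this]; exact measure_univ
  have hF1 : F 1 = 1 := by
    have hle : μ (Iic (1:ℝ)) ≤ 1 := prob_le_one
    have hge : (1:ℝ≥0∞) ≤ μ (Iic 1) := by
      rw [← hμIco]; exact measure_mono (fun x hx => le_of_lt hx.2)
    have : μ (Iic (1:ℝ)) = 1 := le_antisymm hle hge
    simp [hF, this]
  have hG1 : G 1 = 0 := by simp [hG, hF1]
  have hF0 : F 0 = (μ ({0} : Set ℝ)).toReal := by
    have hio : μ (Iio (0:ℝ)) = 0 := by
      apply measure_mono_null _ hμ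
      intro x hx
      simp only [mem_compl_iff, mem_Ico, not_and, not_lt]
      intro h0; exact absurd h0 (not_le.2 hx)
    have hIic : Iic (0:ℝ) = Iio 0 ∪ {0} := by
      ext x
      simp only [mem_Iic, mem_union, mem_singleton_iff, mem_Iio]
      rw [le_iff_lt_or_eq]
    have hkey : μ (Iic (0:ℝ)) = μ {0} := by
      apply le_antisymm
      · calc μ (Iic (0:ℝ)) = μ (Iio 0 ∪ {0}) := by rw [hIic]
          _ ≤ μ (Iio 0) + μ {0} := measure_union_le _ _
          _ = μ {0} := by rw [hio, zero_add]
      · apply measure_mono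
        intro x hx
        simp only [mem_singleton_iff] at hx
        simp [hx]
    simp only [hF]
    rw [hkey]
  have hG0 : G 0 = (μ ({0} : Set ℝ)).toReal := by simp [hG, hF0]
  set V : ℝ := (eVariationOn h (Icc 0 1)).toReal with hV
  -- step approximation comparison
  have happrox : ∀ n : ℕ, 0 < n →
      |(∫ x, h x ∂μ - ∫ x in (0:ℝ)..1, h x) -
        (h 0 * (μ {0}).toReal + ∑ i ∈ Finset.range n,
          h (((i:ℝ)+1)/n) * (G (((i:ℝ)+1)/n) - G ((i:ℝ)/n)))| ≤ 2 * (K₀ / n) := by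
    intro n hn
    have hn' : (0:ℝ) < n := by exact_mod_cast hn
    have A1 := stepapprox μ hμ hm hmod n hn
    have A2 := stepapprox ρ hρc hm hmod n hn
    rw [hρint, hρ0] at A2
    have hmem1 : ∀ i : ℕ, i < n → ((i:ℝ)+1)/n ∈ Icc (0:ℝ) 1 := by
      intro i hi
      constructor
      · positivity
      · rw [div_le_one hn']
        have : (i:ℝ) + 1 ≤ n := by exact_mod_cast Nat.succ_le_of_lt hi
        linarith
    have hmem0 : ∀ i : ℕ, i < n → ((i:ℝ))/n ∈ Icc (0:ℝ) 1 := by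
      intro i hi
      constructor
      · positivity
      · rw [div_le_one hn']
        exact_mod_cast le_of_lt hi
    have hsumρ : ∑ i ∈ Finset.range n,
        h (((i:ℝ)+1)/n) * ((ρ (Iic (((i:ℝ)+1)/n))).toReal - (ρ (Iic ((i:ℝ)/n))).toReal)
        = ∑ i ∈ Finset.range n, h (((i:ℝ)+1)/n) * ((((i:ℝ)+1)/n) - ((i:ℝ)/n)) := by
      apply Finset.sum_congr rfl
      intro i hi
      rw [Finset.mem_range] at hi
      rw [hρIic _ (hmem1 i hi), hρIic _ (hmem0 i hi)]
    rw [hsumρ] at A2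
    have huniv : ((μ univ).toReal : ℝ) = 1 := by simp
    have huniv2 : ((ρ univ).toReal : ℝ) = 1 := by
      rw [hρdef, Measure.restrict_apply_univ, Real.volume_Ico]
      norm_num
    rw [huniv] at A1
    rw [huniv2] at A2
    rw [mul_one] at A1 A2
    have hGid : ∑ i ∈ Finset.range n,
        h (((i:ℝ)+1)/n) * (G (((i:ℝ)+1)/n) - G ((i:ℝ)/n))
        = (∑ i ∈ Finset.range n,
            h (((i:ℝ)+1)/n) * ((μ (Iic (((i:ℝ)+1)/n))).toReal - (μ (Iic ((i:ℝ)/n))).toReal))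
          - ∑ i ∈ Finset.range n, h (((i:ℝ)+1)/n) * ((((i:ℝ)+1)/n) - ((i:ℝ)/n)) := by
      rw [← Finset.sum_sub_distrib]
      apply Finset.sum_congr rfl
      intro i _
      simp only [hG, hF]
      ring
    rw [hGid]
    set X := ∫ x, h x ∂μ - (h 0 * (μ {0}).toReal + ∑ i ∈ Finset.range n,
      h (((i:ℝ)+1)/n) * ((μ (Iic (((i:ℝ)+1)/n))).toReal - (μ (Iic ((i:ℝ)/n))).toReal)) with hX
    set Y := (∫ x in (0:ℝ)..1, h x) - (h 0 * 0 + ∑ i ∈ Finset.range n,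
      h (((i:ℝ)+1)/n) * ((((i:ℝ)+1)/n) - ((i:ℝ)/n))) with hY
    have hgoal : (∫ x, h x ∂μ - ∫ x in (0:ℝ)..1, h x) -
        (h 0 * (μ {0}).toReal + ((∑ i ∈ Finset.range n,
            h (((i:ℝ)+1)/n) * ((μ (Iic (((i:ℝ)+1)/n))).toReal - (μ (Iic ((i:ℝ)/n))).toReal))
          - ∑ i ∈ Finset.range n, h (((i:ℝ)+1)/n) * ((((i:ℝ)+1)/n) - ((i:ℝ)/n)))) = X - Y := by
      rw [hX, hY]; ring
    rw [hgoal]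
    calc |X - Y| ≤ |X| + |Y| := abs_sub _ _
      _ ≤ K₀/n + K₀/n := add_le_add A1 A2
      _ = 2 * (K₀/n) := by ring
  -- Abel summation bound for the bracket
  have habel : ∀ n : ℕ, 0 < n →
      |h 0 * (μ {0}).toReal + ∑ i ∈ Finset.range n,
        h (((i:ℝ)+1)/n) * (G (((i:ℝ)+1)/n) - G ((i:ℝ)/n))| ≤ V * ψ₀ := by
    intro n hn
    have hn' : (0:ℝ) < n := by exact_mod_cast hn
    set u : ℕ → ℝ := fun i => min ((i:ℝ)/n) 1 with hu
    have humono : Monotone u := by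
      apply Monotone.min _ monotone_const
      intro a b hab
      exact (div_le_div_iff_of_pos_right hn').2 (by exact_mod_cast hab)
    have hueq : ∀ i : ℕ, i ≤ n → u i = (i:ℝ)/n := by
      intro i hi
      exact min_eq_left (by rw [div_le_one hn']; exact_mod_cast hi)
    have humem : ∀ i, u i ∈ Icc (0:ℝ) 1 :=
      fun i => ⟨le_min (by positivity) zero_le_one, min_le_right _ _⟩
    have hsum_le := eVariationOn.sum_le (f := h) (n := n) humono humem
    have hDnn : 0 ≤ ∑ i ∈ Finset.range n, |h (u (i+1)) - h (u i)| :=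
      Finset.sum_nonneg fun i _ => abs_nonneg _
    have hDh : ∑ i ∈ Finset.range n, |h (u (i+1)) - h (u i)| ≤ V := by
      have h1 : ENNReal.ofReal (∑ i ∈ Finset.range n, |h (u (i+1)) - h (u i)|)
          = ∑ i ∈ Finset.range n, edist (h (u (i+1))) (h (u i)) := by
        rw [ENNReal.ofReal_sum_of_nonneg (fun i _ => abs_nonneg _)]
        apply Finset.sum_congr rfl
        intro i _
        rw [edist_dist, Real.dist_eq]
      have h2 : ENNReal.ofReal (∑ i ∈ Finset.range n, |h (u (i+1)) - h (u i)|)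
          ≤ eVariationOn h (Icc 0 1) := h1 ▸ hsum_le
      calc ∑ i ∈ Finset.range n, |h (u (i+1)) - h (u i)|
          = (ENNReal.ofReal (∑ i ∈ Finset.range n, |h (u (i+1)) - h (u i)|)).toReal :=
            (ENNReal.toReal_ofReal hDnn).symm
        _ ≤ V := ENNReal.toReal_mono hBV h2
    have htel := Finset.sum_range_sub (fun i => h (u i) * G (u i)) n
    have hun : u n = 1 := by rw [hueq n le_rfl]; field_simp
    have hu0 : u 0 = 0 := by rw [hueq 0 (Nat.zero_le n)]; simp
    have hident : h 0 * (μ {0}).toReal + ∑ i ∈ Finset.range n,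
        h (((i:ℝ)+1)/n) * (G (((i:ℝ)+1)/n) - G ((i:ℝ)/n))
        = - ∑ i ∈ Finset.range n, (h (u (i+1)) - h (u i)) * G (u i) := by
      have e1 : ∀ i ∈ Finset.range n,
          h (((i:ℝ)+1)/n) * (G (((i:ℝ)+1)/n) - G ((i:ℝ)/n))
          = (h (u (i+1)) * G (u (i+1)) - h (u i) * G (u i))
            - (h (u (i+1)) - h (u i)) * G (u i) := by
        intro i hi
        rw [Finset.mem_range] at hi
        rw [hueq (i+1) hi, hueq i (le_of_lt hi)]
        push_cast
        ring
      rw [Finset.sum_congr rfl e1, Finset.sum_sub_distrib, htel, hun, hu0, hG1, hG0]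
      ring
    rw [hident, abs_neg]
    calc |∑ i ∈ Finset.range n, (h (u (i+1)) - h (u i)) * G (u i)|
        ≤ ∑ i ∈ Finset.range n, |(h (u (i+1)) - h (u i)) * G (u i)| :=
          Finset.abs_sum_le_sum_abs _ _
      _ ≤ ∑ i ∈ Finset.range n, |h (u (i+1)) - h (u i)| * ψ₀ := by
          apply Finset.sum_le_sum
          intro i _
          rw [abs_mul]
          exact mul_le_mul_of_nonneg_left (hψ₀ (u i) (humem i)) (abs_nonneg _)
      _ = (∑ i ∈ Finset.range n, |h (u (i+1)) - h (u i)|) * ψ₀ := by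
          rw [← Finset.sum_mul]
      _ ≤ V * ψ₀ := mul_le_mul_of_nonneg_right hDh hψnn
  -- combine the two estimates
  have hboth : ∀ n : ℕ, 0 < n →
      |∫ x, h x ∂μ - ∫ x in (0:ℝ)..1, h x| ≤ V * ψ₀ + 2 * (K₀ / n) := by
    intro n hn
    have h1 := happrox n hn
    have h2 := habel n hn
    set A := ∫ x, h x ∂μ - ∫ x in (0:ℝ)..1, h x with hA
    set B := h 0 * (μ {0}).toReal + ∑ i ∈ Finset.range n,
      h (((i:ℝ)+1)/n) * (G (((i:ℝ)+1)/n) - G ((i:ℝ)/n)) with hB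
    calc |A| = |(A - B) + B| := by rw [sub_add_cancel]
      _ ≤ |A - B| + |B| := abs_add_le _ _
      _ ≤ 2 * (K₀ / n) + V * ψ₀ := add_le_add h1 h2
      _ = V * ψ₀ + 2 * (K₀ / n) := by ring
  refine le_of_forall_pos_le_add ?_
  intro ε hε
  obtain ⟨n, hnn⟩ := exists_nat_gt (2 * K₀ / ε)
  have hnonneg : (0:ℝ) ≤ 2 * K₀ / ε := by positivity
  have hn0 : 0 < n := by
    rcases Nat.eq_zero_or_pos n with rfl | h
    · exfalso; rw [Nat.cast_zero] at hnn; linarith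
    · exact h
  have hn' : (0:ℝ) < n := by exact_mod_cast hn0
  have h2 : 2 * (K₀ / n) < ε := by
    rw [div_lt_iff₀ hε] at hnn
    have : 2 * (K₀ / n) = 2 * K₀ / n := by ring
    rw [this, div_lt_iff₀ hn']
    nlinarith
  exact le_trans (hboth n hn0) (by linarith)

/-- integrability of bounded measurable functions against finite measures -/
lemma bdd_integrable {α : Type*} [MeasurableSpace α] (ρ : Measure α) [IsFiniteMeasure ρ] {φ : α → ℝ} (hφ : Measurable φ)
    (M : ℝ) (hM : ∀ x, |φ x| ≤ M) : Integrable φ ρ := by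
  refine Integrable.mono' (integrable_const M) hφ.aestronglyMeasurable ?_
  exact Filter.Eventually.of_forall fun x => by simpa [Real.norm_eq_abs] using hM x

lemma h_measurable {f g : ℝ → ℝ} (hfm : Measurable f) (hgm : Measurable g) : Measurable (fun s : ℝ => ∫ u in Ico (0:ℝ) 1, f u * g (u + s)) := by
  have hsm : StronglyMeasurable (fun p : ℝ × ℝ => f p.2 * g (p.2 + p.1)) := by
    apply Measurable.stronglyMeasurable
    exact ((hfm.comp measurable_snd).mul (hgm.comp (measurable_snd.add measurable_fst)))
  exact (hsm.integral_prod_right' (ν := volume.restrict (Ico (0:ℝ) 1))).measurable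

lemma bdd_integrableOn {φ : ℝ → ℝ} (hφ : Measurable φ) (M : ℝ) (hM : ∀ x, |φ x| ≤ M)
    (a b : ℝ) : IntegrableOn φ (Ico a b) volume := by
  haveI : IsFiniteMeasure (volume.restrict (Ico a b)) := by
    constructor
    rw [Measure.restrict_apply_univ, Real.volume_Ico]
    exact ENNReal.ofReal_lt_top
  exact bdd_integrable _ hφ M hM

lemma h_lip {f g : ℝ → ℝ} (hfp : Function.Periodic f 1) (hgp : Function.Periodic g 1)
    (hfm : Measurable f) (hgm : Measurable g)
    (hfBV : BoundedVariationOn f (Set.Icc 0 1)) (hgBV : BoundedVariationOn g (Set.Icc 0 1)) :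
    ∀ x ∈ Icc (0:ℝ) 1, ∀ t ∈ Icc (0:ℝ) 1,
      |(∫ u in Ico (0:ℝ) 1, f u * g (u + x)) - ∫ u in Ico (0:ℝ) 1, f u * g (u + t)|
        ≤ ((|f 0| + (eVariationOn f (Icc 0 1)).toReal) *
            (eVariationOn g (Icc (-1) 3)).toReal) * |x - t| := by
  set Mf : ℝ := |f 0| + (eVariationOn f (Icc 0 1)).toReal with hMfdef
  have hMfnn : 0 ≤ Mf := by
    have := abs_nonneg (f 0)
    have := ENNReal.toReal_nonneg (a := eVariationOn f (Icc 0 1))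
    rw [hMfdef]; linarith
  have hfb : ∀ x, |f x| ≤ Mf := periodic_bound hfp hfBV
  set Mg : ℝ := |g 0| + (eVariationOn g (Icc 0 1)).toReal with hMgdef
  have hgb : ∀ x, |g x| ≤ Mg := periodic_bound hgp hgBV
  set W : ℝ → ℝ := fun y => (eVariationOn g (Icc (-1) (min y 3))).toReal with hWdef
  have hWtop : eVariationOn g (Icc (-1:ℝ) 3) ≠ ⊤ := evar_big hgp hgBV
  have hWle : ∀ y : ℝ, eVariationOn g (Icc (-1:ℝ) (min y 3)) ≤ eVariationOn g (Icc (-1:ℝ) 3) :=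
    fun y => eVariationOn.mono _ (Icc_subset_Icc le_rfl (min_le_right _ _))
  have hWmono : Monotone W := by
    intro a b hab
    exact ENNReal.toReal_mono (ne_top_of_le_ne_top hWtop (hWle b))
      (eVariationOn.mono _ (Icc_subset_Icc le_rfl (min_le_min_right 3 hab)))
  have hWnn : ∀ y, 0 ≤ W y := fun y => ENNReal.toReal_nonneg
  have hW3 : W 3 = (eVariationOn g (Icc (-1) 3)).toReal := by
    rw [hWdef]; simp
  have hWb : ∀ y, W y ≤ W 3 := by
    intro y
    rw [hW3]
    exact ENNReal.toReal_mono hWtop (hWle y)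
  have hWmeas : Measurable W := hWmono.measurable
  -- difference bound from variation
  have hWdiff : ∀ a b : ℝ, -1 ≤ a → a ≤ b → b ≤ 3 → |g b - g a| ≤ W b - W a := by
    intro a b h1 h2 h3
    have hsplit := evar_Icc_split (g := g) (-1) a b h1 h2
    have hfin_ab : eVariationOn g (Icc a b) ≠ ⊤ :=
      ne_top_of_le_ne_top hWtop (eVariationOn.mono _ (Icc_subset_Icc h1 h3))
    have hfin_a : eVariationOn g (Icc (-1) a) ≠ ⊤ :=
      ne_top_of_le_ne_top hWtop (eVariationOn.mono _ (Icc_subset_Icc le_rfl (by linarith)))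
    have hWa : W a = (eVariationOn g (Icc (-1) a)).toReal := by
      rw [hWdef]; simp [min_eq_left (by linarith : a ≤ (3:ℝ))]
    have hWbb : W b = (eVariationOn g (Icc (-1) b)).toReal := by
      rw [hWdef]; simp [min_eq_left h3]
    have hWsum : W b = W a + (eVariationOn g (Icc a b)).toReal := by
      rw [hWa, hWbb, ← hsplit, ENNReal.toReal_add hfin_a hfin_ab]
    have hd : |g b - g a| ≤ (eVariationOn g (Icc a b)).toReal := by
      have hedist := eVariationOn.edist_le g (s := Icc a b)
        ⟨le_refl a, h2⟩ ⟨h2, le_refl b⟩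
      have : dist (g a) (g b) ≤ (eVariationOn g (Icc a b)).toReal := by
        rw [dist_edist]
        exact ENNReal.toReal_mono hfin_ab hedist
      rw [Real.dist_eq] at this
      rw [abs_sub_comm]
      exact this
    linarith
  have iiW : ∀ a b : ℝ, IntervalIntegrable W volume a b :=
    fun a b => (hWmono.monotoneOn _).intervalIntegrable
  -- integrability facts
  have hint : ∀ c : ℝ, IntegrableOn (fun u => f u * g (u + c)) (Ico (0:ℝ) 1) volume := by
    intro c
    apply bdd_integrableOn (φ := fun u => f u * g (u + c))
      (hfm.mul (hgm.comp (measurable_add_const c))) (Mf * Mg)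
    intro x
    rw [abs_mul]
    exact mul_le_mul (hfb x) (hgb _) (abs_nonneg _) hMfnn
  have hintW : ∀ c : ℝ, IntegrableOn (fun u => W (u + c)) (Ico (0:ℝ) 1) volume := by
    intro c
    apply bdd_integrableOn (φ := fun u => W (u + c))
      (hWmeas.comp (measurable_add_const c)) (W 3)
    intro x
    rw [abs_of_nonneg (hWnn _)]
    exact hWb _
  have key : ∀ x ∈ Icc (0:ℝ) 1, ∀ t ∈ Icc (0:ℝ) 1, x ≤ t →
      |(∫ u in Ico (0:ℝ) 1, f u * g (u + t)) - ∫ u in Ico (0:ℝ) 1, f u * g (u + x)|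
        ≤ (Mf * W 3) * (t - x) := by
    intro x hx t ht hxt
    have e1 : (∫ u in Ico (0:ℝ) 1, f u * g (u + t)) - (∫ u in Ico (0:ℝ) 1, f u * g (u + x))
        = ∫ u in Ico (0:ℝ) 1, (f u * g (u + t) - f u * g (u + x)) :=
      (integral_sub (hint t) (hint x)).symm
    have e2 : |∫ u in Ico (0:ℝ) 1, (f u * g (u + t) - f u * g (u + x))|
        ≤ ∫ u in Ico (0:ℝ) 1, |f u * g (u + t) - f u * g (u + x)| := by
      have := norm_integral_le_integral_norm (μ := volume.restrict (Ico (0:ℝ) 1))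
        (f := fun u => f u * g (u + t) - f u * g (u + x))
      simpa [Real.norm_eq_abs] using this
    have e3 : ∫ u in Ico (0:ℝ) 1, |f u * g (u + t) - f u * g (u + x)|
        ≤ ∫ u in Ico (0:ℝ) 1, Mf * (W (u + t) - W (u + x)) := by
      apply setIntegral_mono_on ((hint t).sub (hint x)).abs
      · apply Integrable.const_mul
        exact (hintW t).sub (hintW x)
      · exact measurableSet_Ico
      · intro u hu
        have hu0 : (0:ℝ) ≤ u := hu.1
        have hu1 : u < 1 := hu.2
        have hd : |g (u + t) - g (u + x)| ≤ W (u + t) - W (u + x) := by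
          apply hWdiff
          · linarith [hx.1]
          · linarith
          · linarith [ht.2]
        calc |f u * g (u + t) - f u * g (u + x)| = |f u| * |g (u + t) - g (u + x)| := by
              rw [← abs_mul, mul_sub]
          _ ≤ Mf * (W (u + t) - W (u + x)) :=
              mul_le_mul (hfb u) hd (abs_nonneg _) hMfnn
    have e4 : ∫ u in Ico (0:ℝ) 1, Mf * (W (u + t) - W (u + x))
        = Mf * ((∫ u in Ico (0:ℝ) 1, W (u + t)) - ∫ u in Ico (0:ℝ) 1, W (u + x)) := by
      rw [MeasureTheory.integral_const_mul, integral_sub (hintW t) (hintW x)]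
    have e5 : ∀ c : ℝ, (∫ u in Ico (0:ℝ) 1, W (u + c)) = ∫ y in c..(1+c), W y := by
      intro c
      rw [MeasureTheory.integral_Ico_eq_integral_Ioo, ← MeasureTheory.integral_Ioc_eq_integral_Ioo,
        ← intervalIntegral.integral_of_le (by norm_num : (0:ℝ) ≤ 1)]
      have := intervalIntegral.integral_comp_add_right (a := (0:ℝ)) (b := 1) (fun y => W y) c
      rw [this, zero_add]
    have e6 : (∫ y in t..(1+t), W y) - (∫ y in x..(1+x), W y)
        = (∫ y in (1+x)..(1+t), W y) - ∫ y in x..t, W y := by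
      have h1 := intervalIntegral.integral_add_adjacent_intervals (iiW x t) (iiW t (1+t))
      have h2 := intervalIntegral.integral_add_adjacent_intervals (iiW x (1+x)) (iiW (1+x) (1+t))
      rw [← h2] at h1
      linarith
    have e7 : (∫ y in (1+x)..(1+t), W y) ≤ (t - x) * W 3 := by
      calc (∫ y in (1+x)..(1+t), W y) ≤ ∫ _ in (1+x)..(1+t), W 3 :=
            intervalIntegral.integral_mono_on (by linarith) (iiW _ _)
              intervalIntegrable_const (fun y _ => hWb y)
        _ = (t - x) * W 3 := by
            rw [intervalIntegral.integral_const, smul_eq_mul]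
            ring
    have e8 : 0 ≤ ∫ y in x..t, W y :=
      intervalIntegral.integral_nonneg hxt (fun y _ => hWnn y)
    calc |(∫ u in Ico (0:ℝ) 1, f u * g (u + t)) - ∫ u in Ico (0:ℝ) 1, f u * g (u + x)|
        ≤ ∫ u in Ico (0:ℝ) 1, Mf * (W (u + t) - W (u + x)) := by
          rw [e1]; exact le_trans e2 e3
      _ = Mf * ((∫ y in t..(1+t), W y) - ∫ y in x..(1+x), W y) := by rw [e4, e5, e5]
      _ = Mf * ((∫ y in (1+x)..(1+t), W y) - ∫ y in x..t, W y) := by rw [e6]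
      _ ≤ Mf * ((t - x) * W 3) := by
          apply mul_le_mul_of_nonneg_left _ hMfnn
          linarith
      _ = (Mf * W 3) * (t - x) := by ring
  intro x hx t ht
  rw [← hW3]
  rcases le_total x t with hxt | htx
  · rw [abs_sub_comm, abs_of_nonpos (by linarith : x - t ≤ 0)]
    have := key x hx t ht hxt
    calc |(∫ u in Ico (0:ℝ) 1, f u * g (u + t)) - ∫ u in Ico (0:ℝ) 1, f u * g (u + x)|
        ≤ (Mf * W 3) * (t - x) := this
      _ = Mf * W 3 * -(x - t) := by ring
  · rw [abs_of_nonneg (by linarith : 0 ≤ x - t)]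
    exact key t ht x hx htx


lemma h_var {f g : ℝ → ℝ} (hfp : Function.Periodic f 1) (hgp : Function.Periodic g 1)
    (hfm : Measurable f) (hgm : Measurable g)
    (hfBV : BoundedVariationOn f (Set.Icc 0 1)) (hgBV : BoundedVariationOn g (Set.Icc 0 1)) :
    eVariationOn (fun s => ∫ u in Ico (0:ℝ) 1, f u * g (u + s)) (Icc 0 1)
      ≤ ENNReal.ofReal ((∫ x in (0:ℝ)..1, |f x|) * (eVariationOn g (Icc 0 1)).toReal) := by
  set Vg : ℝ := (eVariationOn g (Icc 0 1)).toReal with hVg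
  set Mf : ℝ := |f 0| + (eVariationOn f (Icc 0 1)).toReal with hMf
  have hfb : ∀ x, |f x| ≤ Mf := periodic_bound hfp hfBV
  set Mg : ℝ := |g 0| + Vg with hMg
  have hgb : ∀ x, |g x| ≤ Mg := periodic_bound hgp hgBV
  have hintfg : ∀ c : ℝ, IntegrableOn (fun u => f u * g (u + c)) (Ico (0:ℝ) 1) volume := by
    intro c
    apply bdd_integrableOn (φ := fun u => f u * g (u + c))
      (hfm.mul (hgm.comp (measurable_add_const c))) (Mf * Mg)
    intro x
    rw [abs_mul]
    exact mul_le_mul (hfb x) (hgb _) (abs_nonneg _) (le_trans (abs_nonneg (f 0)) (by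
      have := ENNReal.toReal_nonneg (a := eVariationOn f (Icc 0 1)); rw [hMf]; linarith))
  have hMfnn : 0 ≤ Mf := le_trans (abs_nonneg (f 0)) (by
    have := ENNReal.toReal_nonneg (a := eVariationOn f (Icc 0 1)); rw [hMf]; linarith)
  have hintJ : ∀ a b : ℝ, IntegrableOn (fun v => |f v| * |g (v + b) - g (v + a)|)
      (Ico (0:ℝ) 1) volume := by
    intro a b
    apply bdd_integrableOn (φ := fun v => |f v| * |g (v + b) - g (v + a)|)
      (hfm.abs.mul ((hgm.comp (measurable_add_const b)).sub
        (hgm.comp (measurable_add_const a))).abs) (Mf * (Mg + Mg))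
    intro x
    rw [abs_of_nonneg (mul_nonneg (abs_nonneg _) (abs_nonneg _))]
    apply mul_le_mul (hfb x) _ (abs_nonneg _) hMfnn
    calc |g (x + b) - g (x + a)| ≤ |g (x + b)| + |g (x + a)| := abs_sub _ _
      _ ≤ Mg + Mg := add_le_add (hgb _) (hgb _)
  apply iSup_le
  rintro ⟨n, u, humono, humem⟩
  dsimp only
  -- rewrite the partition sum as ofReal of a real sum
  have hsum_eq : ∑ i ∈ Finset.range n,
      edist ((fun s => ∫ v in Ico (0:ℝ) 1, f v * g (v + s)) (u (i+1)))
            ((fun s => ∫ v in Ico (0:ℝ) 1, f v * g (v + s)) (u i))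
      = ENNReal.ofReal (∑ i ∈ Finset.range n,
          |(∫ v in Ico (0:ℝ) 1, f v * g (v + u (i+1))) - ∫ v in Ico (0:ℝ) 1, f v * g (v + u i)|) := by
    rw [ENNReal.ofReal_sum_of_nonneg (fun i _ => abs_nonneg _)]
    apply Finset.sum_congr rfl
    intro i _
    rw [edist_dist, Real.dist_eq]
  rw [hsum_eq]
  apply ENNReal.ofReal_le_ofReal
  -- bound each increment by an integral
  have step1 : ∀ i, |(∫ v in Ico (0:ℝ) 1, f v * g (v + u (i+1))) - ∫ v in Ico (0:ℝ) 1, f v * g (v + u i)|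
      ≤ ∫ v in Ico (0:ℝ) 1, |f v| * |g (v + u (i+1)) - g (v + u i)| := by
    intro i
    rw [← integral_sub (hintfg (u (i+1))) (hintfg (u i))]
    have h1 := norm_integral_le_integral_norm (μ := volume.restrict (Ico (0:ℝ) 1))
      (f := fun v => f v * g (v + u (i+1)) - f v * g (v + u i))
    rw [Real.norm_eq_abs] at h1
    apply le_trans h1
    apply le_of_eq
    apply integral_congr_ae
    apply Filter.Eventually.of_forall
    intro v
    simp only [Real.norm_eq_abs]
    rw [← abs_mul, mul_sub]
  calc ∑ i ∈ Finset.range n,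
      |(∫ v in Ico (0:ℝ) 1, f v * g (v + u (i+1))) - ∫ v in Ico (0:ℝ) 1, f v * g (v + u i)|
      ≤ ∑ i ∈ Finset.range n, ∫ v in Ico (0:ℝ) 1, |f v| * |g (v + u (i+1)) - g (v + u i)| :=
        Finset.sum_le_sum fun i _ => step1 i
    _ = ∫ v in Ico (0:ℝ) 1, ∑ i ∈ Finset.range n, |f v| * |g (v + u (i+1)) - g (v + u i)| :=
        (integral_finset_sum _ (fun i _ => hintJ (u i) (u (i+1)))).symm
    _ = ∫ v in Ico (0:ℝ) 1, |f v| * ∑ i ∈ Finset.range n, |g (v + u (i+1)) - g (v + u i)| := by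
        apply integral_congr_ae
        apply Filter.Eventually.of_forall
        intro v
        simp only [Finset.mul_sum]
    _ ≤ ∫ v in Ico (0:ℝ) 1, |f v| * Vg := by
        apply setIntegral_mono_on
        · have : (fun v => |f v| * ∑ i ∈ Finset.range n, |g (v + u (i+1)) - g (v + u i)|)
              = fun v => ∑ i ∈ Finset.range n, |f v| * |g (v + u (i+1)) - g (v + u i)| := by
            funext v; rw [Finset.mul_sum]
          rw [this]
          exact integrable_finset_sum _ (fun i _ => hintJ (u i) (u (i+1)))
        · exact (bdd_integrableOn (φ := fun v => |f v| * Vg)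
            (hfm.abs.mul measurable_const) (Mf * |Vg|) (fun x => by
              rw [abs_mul, abs_abs]
              exact mul_le_mul_of_nonneg_right (hfb x) (abs_nonneg _)) 0 1)
        · exact measurableSet_Ico
        · intro v hv
          apply mul_le_mul_of_nonneg_left _ (abs_nonneg _)
          -- partition sum of g over window [v, v+1]
          have hwin : eVariationOn g (Icc v (v+1)) = eVariationOn g (Icc 0 1) :=
            evar_window hgp ⟨hv.1, le_of_lt hv.2⟩
          have hfin : eVariationOn g (Icc v (v+1)) ≠ ⊤ := by rw [hwin]; exact hgBV
          have hsum := eVariationOn.sum_le (f := g) (s := Icc v (v+1)) (n := n) (u := fun i => v + u i)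
            (fun a b hab => by simpa using humono hab)
            (fun i => mem_Icc.2 ⟨by linarith [(humem i).1],
              by linarith [(humem i).2]⟩)
          have hofr : ENNReal.ofReal (∑ i ∈ Finset.range n, |g (v + u (i+1)) - g (v + u i)|)
              ≤ eVariationOn g (Icc v (v+1)) := by
            rw [ENNReal.ofReal_sum_of_nonneg (fun i _ => abs_nonneg _)]
            calc ∑ i ∈ Finset.range n, ENNReal.ofReal |g (v + u (i+1)) - g (v + u i)|
                = ∑ i ∈ Finset.range n, edist (g (v + u (i+1))) (g (v + u i)) := by
                  apply Finset.sum_congr rfl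
                  intro i _
                  rw [edist_dist, Real.dist_eq]
              _ ≤ eVariationOn g (Icc v (v+1)) := hsum
          have := ENNReal.toReal_mono hfin hofr
          rw [ENNReal.toReal_ofReal (Finset.sum_nonneg fun i _ => abs_nonneg _), hwin] at this
          exact this
    _ = (∫ v in Ico (0:ℝ) 1, |f v|) * Vg := by rw [integral_mul_const]
    _ = (∫ x in (0:ℝ)..1, |f x|) * Vg := by
        rw [intervalIntegral.integral_of_le (by norm_num : (0:ℝ) ≤ 1),
          MeasureTheory.integral_Ioc_eq_integral_Ioo, ← MeasureTheory.integral_Ico_eq_integral_Ioo]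

lemma h_zero {f g : ℝ → ℝ} (hfp : Function.Periodic f 1) (hgp : Function.Periodic g 1)
    (hfm : Measurable f) (hgm : Measurable g)
    (hfBV : BoundedVariationOn f (Set.Icc 0 1)) (hgBV : BoundedVariationOn g (Set.Icc 0 1))
    (hg0 : ∫ x in (0:ℝ)..1, g x = 0) :
    ∫ s in (0:ℝ)..1, (∫ u in Ico (0:ℝ) 1, f u * g (u + s)) = 0 := by
  set Mf : ℝ := |f 0| + (eVariationOn f (Icc 0 1)).toReal with hMf
  have hfb : ∀ x, |f x| ≤ Mf := periodic_bound hfp hfBV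
  set Mg : ℝ := |g 0| + (eVariationOn g (Icc 0 1)).toReal with hMg
  have hgb : ∀ x, |g x| ≤ Mg := periodic_bound hgp hgBV
  haveI h1 : IsFiniteMeasure (volume.restrict (Ioc (0:ℝ) 1)) := by
    constructor
    rw [Measure.restrict_apply_univ, Real.volume_Ioc]
    exact ENNReal.ofReal_lt_top
  haveI h2 : IsFiniteMeasure (volume.restrict (Ico (0:ℝ) 1)) := by
    constructor
    rw [Measure.restrict_apply_univ, Real.volume_Ico]
    exact ENNReal.ofReal_lt_top
  rw [intervalIntegral.integral_of_le (by norm_num : (0:ℝ) ≤ 1)]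
  have hswap := MeasureTheory.integral_integral_swap (μ := volume.restrict (Ioc (0:ℝ) 1))
    (ν := volume.restrict (Ico (0:ℝ) 1)) (f := fun s u => f u * g (u + s)) ?_
  · rw [hswap]
    have hinner : ∀ u : ℝ, (∫ s in Ioc (0:ℝ) 1, f u * g (u + s)) = 0 := by
      intro u
      rw [MeasureTheory.integral_const_mul]
      have : (∫ s in Ioc (0:ℝ) 1, g (u + s)) = ∫ s in (0:ℝ)..1, g (u + s) := by
        rw [intervalIntegral.integral_of_le (by norm_num : (0:ℝ) ≤ 1)]
      rw [this]
      have hc : (∫ s in (0:ℝ)..1, g (u + s)) = ∫ y in (u+0)..(u+1), g y :=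
        intervalIntegral.integral_comp_add_left (a := (0:ℝ)) (b := 1) g u
      rw [hc]
      have hp : (∫ y in (u+0)..(u+1), g y) = ∫ y in (0:ℝ)..(0+1), g y := by
        rw [add_zero]
        have := hgp.intervalIntegral_add_eq u 0
        simpa using this
      rw [hp]
      simp only [zero_add]
      rw [hg0, mul_zero]
    calc ∫ u in Ico (0:ℝ) 1, ∫ s in Ioc (0:ℝ) 1, f u * g (u + s)
        = ∫ u in Ico (0:ℝ) 1, (0:ℝ) := by
          apply integral_congr_ae
          exact Filter.Eventually.of_forall fun u => hinner u
      _ = 0 := integral_zero _ _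
  · apply Integrable.mono' (integrable_const (Mf * Mg))
    · apply Measurable.aestronglyMeasurable
      exact (hfm.comp measurable_snd).mul (hgm.comp (measurable_snd.add measurable_fst))
    · apply Filter.Eventually.of_forall
      rintro ⟨s, u⟩
      have hMfnn : 0 ≤ Mf := le_trans (abs_nonneg (f 0)) (by
        have := ENNReal.toReal_nonneg (a := eVariationOn f (Icc 0 1)); rw [hMf]; linarith)
      simp only [Function.uncurry, Real.norm_eq_abs]
      rw [abs_mul]
      exact mul_le_mul (hfb _) (hgb _) (abs_nonneg _) hMfnn


/-- Let `S_k` be partial sums of i.i.d. real random variables with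
`ψ(k) = sup_{t∈[0,1]} |P({S_k} ≤ t) − t| ≤ C k^{-(1+δ)}` for `k ≥ 1`. For `1`-periodic
mean-zero `f, g` of bounded variation on `[0,1]` and `U` uniform on `[0,1)` independent
of the sequence, the series `∑_k E[f(U) g(U+S_k)]` converges absolutely, and
`|E[f(U) g(U+S_k)]| ≤ V(g) ‖f‖_{L¹} ψ(k)` for every `k ≥ 1`. -/
theorem stmt7
    {Ω : Type*} [MeasurableSpace Ω] (P : Measure Ω) [IsProbabilityMeasure P]
    (X : ℕ → Ω → ℝ) (hXm : ∀ i, Measurable (X i))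
    (hindep : iIndepFun (m := fun _ => Real.measurableSpace) X P)
    (hident : ∀ i, Measure.map (X i) P = Measure.map (X 0) P)
    (S : ℕ → Ω → ℝ) (hS : ∀ k ω, S k ω = ∑ j ∈ Finset.range k, X j ω)
    (ψ : ℕ → ℝ)
    (hψ : ∀ k, ψ k = ⨆ t : Set.Icc (0:ℝ) 1,
        |(P {ω | Int.fract (S k ω) ≤ (t : ℝ)}).toReal - (t : ℝ)|)
    (C δ : ℝ) (hδ : 0 < δ)
    (hdecay : ∀ k : ℕ, 1 ≤ k → ψ k ≤ C * (k : ℝ) ^ (-(1 + δ)))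
    (f g : ℝ → ℝ) (hfp : Function.Periodic f 1) (hgp : Function.Periodic g 1)
    (hfm : Measurable f) (hgm : Measurable g)
    (hfBV : BoundedVariationOn f (Set.Icc 0 1))
    (hgBV : BoundedVariationOn g (Set.Icc 0 1))
    (hf0 : ∫ x in (0:ℝ)..1, f x = 0) (hg0 : ∫ x in (0:ℝ)..1, g x = 0)
    (U : Ω → ℝ) (hUm : Measurable U)
    (hUunif : Measure.map U P = volume.restrict (Set.Ico (0:ℝ) 1))
    (hUindep : IndepFun U (fun ω => (X · ω)) P) :
    Summable (fun k : ℕ => |∫ ω, f (U ω) * g (U ω + S (k+1) ω) ∂P|) ∧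
      ∀ k : ℕ, 1 ≤ k →
        |∫ ω, f (U ω) * g (U ω + S k ω) ∂P| ≤
          (eVariationOn g (Set.Icc 0 1)).toReal * (∫ x in (0:ℝ)..1, |f x|) * ψ k := by
  set Vg : ℝ := (eVariationOn g (Set.Icc 0 1)).toReal with hVgdef
  set nf : ℝ := ∫ x in (0:ℝ)..1, |f x| with hnfdef
  have hVgnn : 0 ≤ Vg := ENNReal.toReal_nonneg
  have hnfnn : 0 ≤ nf := by
    rw [hnfdef]
    exact intervalIntegral.integral_nonneg (by norm_num) (fun x _ => abs_nonneg _)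
  set h : ℝ → ℝ := fun s => ∫ u in Ico (0:ℝ) 1, f u * g (u + s) with hdef
  have hSm : ∀ k, Measurable (S k) := by
    intro k
    have : S k = fun ω => ∑ j ∈ Finset.range k, X j ω := funext fun ω => hS k ω
    rw [this]
    exact Finset.measurable_sum _ (fun j _ => hXm j)
  -- properties of h
  have hhm : Measurable h := h_measurable hfm hgm
  have hlip := h_lip hfp hgp hfm hgm hfBV hgBV
  have hvar := h_var hfp hgp hfm hgm hfBV hgBV
  have hBVh : BoundedVariationOn h (Icc 0 1) :=
    ne_top_of_le_ne_top ENNReal.ofReal_ne_top hvar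
  have hz := h_zero hfp hgp hfm hgm hfBV hgBV hg0
  have hVarh : (eVariationOn h (Icc 0 1)).toReal ≤ nf * Vg := by
    have h1 := ENNReal.toReal_mono ENNReal.ofReal_ne_top hvar
    rw [ENNReal.toReal_ofReal (mul_nonneg hnfnn hVgnn)] at h1
    exact h1
  set Mf : ℝ := |f 0| + (eVariationOn f (Icc 0 1)).toReal with hMfdef
  have hfb : ∀ x, |f x| ≤ Mf := periodic_bound hfp hfBV
  have hMfnn : 0 ≤ Mf := le_trans (abs_nonneg _) (hfb 0)
  set Mg : ℝ := |g 0| + Vg with hMgdef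
  have hgb : ∀ x, |g x| ≤ Mg := periodic_bound hgp hgBV
  -- core estimate
  have core : ∀ k : ℕ, |∫ ω, f (U ω) * g (U ω + S k ω) ∂P| ≤ (nf * Vg) * ψ k := by
    intro k
    haveI : IsProbabilityMeasure (Measure.map (S k) P) :=
      Measure.isProbabilityMeasure_map (hSm k).aemeasurable
    haveI : IsProbabilityMeasure (Measure.map U P) :=
      Measure.isProbabilityMeasure_map hUm.aemeasurable
    set ν := Measure.map (S k) P with hν
    -- independence of U and S k
    have hUS : IndepFun U (S k) P := by
      have hφ : Measurable (fun v : ℕ → ℝ => ∑ j ∈ Finset.range k, v j) :=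
        Finset.measurable_sum _ (fun j _ => measurable_pi_apply j)
      have h1 := hUindep.comp measurable_id hφ
      have heq2 : ((fun v : ℕ → ℝ => ∑ j ∈ Finset.range k, v j) ∘ (fun ω => (X · ω))) = S k := by
        funext ω
        simp only [Function.comp_apply]
        exact (hS k ω).symm
      rw [Function.id_comp, heq2] at h1
      exact h1
    have hmap : Measure.map (fun ω => (U ω, S k ω)) P = (Measure.map U P).prod ν :=
      (ProbabilityTheory.indepFun_iff_map_prod_eq_prod_map_map hUm.aemeasurable
        (hSm k).aemeasurable).1 hUS
    have hFmeas : Measurable (fun p : ℝ × ℝ => f p.1 * g (p.1 + p.2)) :=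
      (hfm.comp measurable_fst).mul (hgm.comp (measurable_fst.add measurable_snd))
    have hInt : Integrable (fun p : ℝ × ℝ => f p.1 * g (p.1 + p.2))
        ((Measure.map U P).prod ν) := by
      apply bdd_integrable _ hFmeas (Mf * Mg)
      intro p
      rw [abs_mul]
      exact mul_le_mul (hfb _) (hgb _) (abs_nonneg _) hMfnn
    have e0 : ∫ p, f p.1 * g (p.1 + p.2) ∂((Measure.map U P).prod ν)
        = ∫ ω, f (U ω) * g (U ω + S k ω) ∂P := by
      rw [← hmap, integral_map (hUm.prodMk (hSm k)).aemeasurable hFmeas.aestronglyMeasurable]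
    have e1 : ∫ p, f p.1 * g (p.1 + p.2) ∂((Measure.map U P).prod ν)
        = ∫ s, (∫ u, f u * g (u + s) ∂(Measure.map U P)) ∂ν :=
      MeasureTheory.integral_prod_symm _ hInt
    have e2 : ∀ s, (∫ u, f u * g (u + s) ∂(Measure.map U P)) = h s := by
      intro s
      rw [hUunif]
    -- pass to fractional parts
    have hfractmeas : Measurable (fun ω => Int.fract (S k ω)) :=
      measurable_fract.comp (hSm k)
    set μk := Measure.map (fun ω => Int.fract (S k ω)) P with hμk
    haveI : IsProbabilityMeasure μk := Measure.isProbabilityMeasure_map hfractmeas.aemeasurable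
    have hper : ∀ s : ℝ, h s = h (Int.fract s) := by
      intro s
      apply integral_congr_ae
      apply Filter.Eventually.of_forall
      intro u
      have h2 := hgp.sub_int_mul_eq (x := u + s) ⌊s⌋
      rw [mul_one] at h2
      have harg : u + s - ⌊s⌋ = u + Int.fract s := by rw [Int.fract]; ring
      rw [harg] at h2
      show f u * g (u + s) = f u * g (u + Int.fract s)
      rw [← h2]
    have e3 : ∫ s, h s ∂ν = ∫ x, h x ∂μk := by
      calc ∫ s, h s ∂ν = ∫ s, h (Int.fract s) ∂ν :=
            integral_congr_ae (Filter.Eventually.of_forall hper)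
        _ = ∫ x, h x ∂(Measure.map Int.fract ν) :=
            (integral_map measurable_fract.aemeasurable hhm.aestronglyMeasurable).symm
        _ = ∫ x, h x ∂μk := by
            rw [hν, Measure.map_map measurable_fract (hSm k)]
            rfl
    -- Koksma hypotheses
    have hco : μk (Set.Ico (0:ℝ) 1)ᶜ = 0 := by
      rw [hμk, Measure.map_apply hfractmeas measurableSet_Ico.compl]
      have : (fun ω => Int.fract (S k ω)) ⁻¹' (Ico (0:ℝ) 1)ᶜ = ∅ := by
        ext ω
        simp [Int.fract_nonneg, Int.fract_lt_one]
      rw [this, measure_empty]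
    have hbdd : BddAbove (Set.range fun t : Set.Icc (0:ℝ) 1 =>
        |(P {ω | Int.fract (S k ω) ≤ (t : ℝ)}).toReal - (t : ℝ)|) := by
      refine ⟨2, ?_⟩
      rintro y ⟨t', rfl⟩
      have h1 : (P {ω | Int.fract (S k ω) ≤ (t' : ℝ)}).toReal ≤ 1 := by
        have h2 : P {ω | Int.fract (S k ω) ≤ (t' : ℝ)} ≤ 1 := prob_le_one
        calc (P {ω | Int.fract (S k ω) ≤ (t' : ℝ)}).toReal ≤ (1 : ℝ≥0∞).toReal :=
              ENNReal.toReal_mono (by norm_num) h2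
          _ = 1 := by norm_num
      have h2 : |(t' : ℝ)| ≤ 1 := by
        rw [abs_of_nonneg t'.2.1]
        exact t'.2.2
      calc |(P {ω | Int.fract (S k ω) ≤ (t' : ℝ)}).toReal - (t' : ℝ)|
          ≤ |(P {ω | Int.fract (S k ω) ≤ (t' : ℝ)}).toReal| + |(t' : ℝ)| := abs_sub _ _
        _ ≤ 1 + 1 := add_le_add (by rw [abs_of_nonneg ENNReal.toReal_nonneg]; exact h1) h2
        _ = 2 := by norm_num
    have hψk : ∀ t ∈ Icc (0:ℝ) 1, |(μk (Iic t)).toReal - t| ≤ ψ k := by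
      intro t ht
      have hm : μk (Iic t) = P {ω | Int.fract (S k ω) ≤ t} := by
        rw [hμk, Measure.map_apply hfractmeas measurableSet_Iic]
        rfl
      rw [hm, hψ k]
      exact le_ciSup hbdd (⟨t, ht⟩ : Set.Icc (0:ℝ) 1)
    have hψnn : 0 ≤ ψ k := by
      have h1 := le_ciSup hbdd (⟨(0:ℝ), by norm_num⟩ : Set.Icc (0:ℝ) 1)
      rw [hψ k]
      exact le_trans (abs_nonneg _) h1
    have hkok := koksma μk hco hhm (fun x t hx ht => hlip x hx t ht) hBVh hψk
    rw [hz, sub_zero] at hkok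
    calc |∫ ω, f (U ω) * g (U ω + S k ω) ∂P| = |∫ x, h x ∂μk| := by
          rw [← e0, e1]
          congr 1
          calc ∫ s, (∫ u, f u * g (u + s) ∂(Measure.map U P)) ∂ν
              = ∫ s, h s ∂ν := integral_congr_ae (Filter.Eventually.of_forall e2)
            _ = ∫ x, h x ∂μk := e3
      _ ≤ (eVariationOn h (Icc 0 1)).toReal * ψ k := hkok
      _ ≤ (nf * Vg) * ψ k := mul_le_mul_of_nonneg_right hVarh hψnn
  constructor
  · -- summability
    have hsum0 : Summable (fun n : ℕ => ((n : ℝ)) ^ (-(1 + δ))) :=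
      Real.summable_nat_rpow.2 (by linarith)
    have hsum1 : Summable (fun n : ℕ => (((n + 1 : ℕ) : ℝ)) ^ (-(1 + δ))) :=
      (summable_nat_add_iff 1).2 hsum0
    have hsum2 : Summable (fun n : ℕ => (nf * Vg) * (C * (((n + 1 : ℕ) : ℝ)) ^ (-(1 + δ)))) :=
      (hsum1.mul_left C).mul_left (nf * Vg)
    apply Summable.of_nonneg_of_le (fun k => abs_nonneg _) _ hsum2
    intro k
    calc |∫ ω, f (U ω) * g (U ω + S (k+1) ω) ∂P| ≤ (nf * Vg) * ψ (k+1) := core (k+1)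
      _ ≤ (nf * Vg) * (C * (((k + 1 : ℕ) : ℝ)) ^ (-(1 + δ))) :=
          mul_le_mul_of_nonneg_left (hdecay (k+1) (Nat.le_add_left 1 k))
            (mul_nonneg hnfnn hVgnn)
  · intro k _
    calc |∫ ω, f (U ω) * g (U ω + S k ω) ∂P| ≤ (nf * Vg) * ψ k := core k
      _ = Vg * nf * ψ k := by ring
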